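/- arXiv:1909.09401 — 2 statements merged into one kernel-verified Lean document; each statement's English description precedes it below -/
import Mathlib

section
/- Let R be a ceer with infinitely many classes such that every c.e. set intersecting infinitely many R-classes intersects cofinitely many of them (a Z-dark minimal ceer condition). If W is a c.e. set intersecting infinitely many R-classes, then the R-closure of W is computable and every R-class disjoint from W is computable. -/
/-- Computable reducibility of binary relations on ℕ. -/
def CompReduces (R S : ℕ → ℕ → Prop) : Prop :=
  ∃ f : ℕ → ℕ, Computable f ∧ ∀ x y, (R x y ↔ S (f x) (f y))

/-- Bi-reducibility. -/
def CompEquiv (R S : ℕ → ℕ → Prop) : Prop :=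
  CompReduces R S ∧ CompReduces S R

/-- Uniform join: evens code `R`, odds code `S`. -/
def UJoin (R S : ℕ → ℕ → Prop) : ℕ → ℕ → Prop := fun x y =>
  (∃ u v, x = 2 * u ∧ y = 2 * v ∧ R u v) ∨
  (∃ u v, x = 2 * u + 1 ∧ y = 2 * v + 1 ∧ S u v)

/-- Congruence modulo `n` (for `n ≥ 1` this has exactly `n` classes). -/
def IdN (n : ℕ) : ℕ → ℕ → Prop := fun x y => x % n = y % n

/-- `R ⊕ Id_k`, with the convention `R ⊕ Id_0 = R`. -/
def OplusId (R : ℕ → ℕ → Prop) (k : ℕ) : ℕ → ℕ → Prop :=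
  if k = 0 then R else UJoin R (IdN k)

/-- A ceer: a computably enumerable equivalence relation on ℕ. -/
def IsCeer (R : ℕ → ℕ → Prop) : Prop :=
  Equivalence R ∧ REPred (fun p : ℕ × ℕ => R p.1 p.2)

/-- `R` has infinitely many equivalence classes. -/
def InfiniteClasses (R : ℕ → ℕ → Prop) : Prop :=
  ∀ A : Finset ℕ, ∃ x, ∀ a ∈ A, ¬ R x a

/-- `R` has exactly `n` equivalence classes. -/
def ExactlyNClasses (R : ℕ → ℕ → Prop) (n : ℕ) : Prop :=
  ∃ f : Fin n → ℕ, (∀ i j, i ≠ j → ¬ R (f i) (f j)) ∧ ∀ x, ∃ i, R x (f i)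

/-- `R` has an infinite c.e. transversal. -/
def HasInfiniteTransversal (R : ℕ → ℕ → Prop) : Prop :=
  ∃ W : Set ℕ, REPred (· ∈ W) ∧ W.Infinite ∧
    ∀ x ∈ W, ∀ y ∈ W, x ≠ y → ¬ R x y

/-- A dark ceer: infinitely many classes, no infinite c.e. transversal. -/
def IsDark (R : ℕ → ℕ → Prop) : Prop :=
  IsCeer R ∧ InfiniteClasses R ∧ ¬ HasInfiniteTransversal R

/-- `R ≤_I S`: `R ≤ S ⊕ Id_k` for some `k`. -/
def ReducesI (R S : ℕ → ℕ → Prop) : Prop :=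
  ∃ k, CompReduces R (OplusId S k)

/-- The c.e. set `W` intersects infinitely many `R`-classes. -/
def MeetsInfManyClasses (R : ℕ → ℕ → Prop) (W : Set ℕ) : Prop :=
  ∀ A : Finset ℕ, ∃ x ∈ W, ∀ a ∈ A, ¬ R x a

open Computable Part Nat.Partrec.Code

lemma REPred.comp' {α β} [Primcodable α] [Primcodable β] {p : β → Prop} (hp : REPred p)
    {f : α → β} (hf : Computable f) : REPred fun a => p (f a) :=
  Partrec.comp hp hf

lemma REPred.and {α} [Primcodable α] {p q : α → Prop} (hp : REPred p) (hq : REPred q) :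
    REPred fun a => p a ∧ q a := by
  have : Partrec fun a =>
      (Part.assert (p a) fun _ => Part.some ()).bind fun _ =>
        Part.assert (q a) fun _ => Part.some () :=
    Partrec.bind hp (Partrec.comp hq Computable.fst).to₂
  refine this.of_eq fun a => Part.ext fun u => ?_
  simp [Part.mem_assert_iff]

lemma REPred.or {α} [Primcodable α] {p q : α → Prop} (hp : REPred p) (hq : REPred q) :
    REPred fun a => p a ∨ q a := by
  obtain ⟨k, hk, H⟩ := Partrec.merge' hp hq
  refine hk.dom_re.of_eq fun a => ?_
  rw [(H a).2]
  simp [Part.dom_iff_mem, Part.mem_assert_iff]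

lemma REPred.exists_nat {q : ℕ → ℕ → Prop}
    (h : REPred fun p : ℕ × ℕ => q p.1 p.2) : REPred fun a => ∃ n, q a n := by
  have hg : Partrec fun n : ℕ =>
      (Part.assert (q n.unpair.1 n.unpair.2) fun _ => Part.some ()).map fun _ => 0 :=
    (Partrec.comp h (Primrec.unpair.to_comp)).map ((Computable.const 0).comp Computable.fst).to₂
  obtain ⟨c, hc⟩ := exists_code.1 (Partrec.nat_iff.1 hg)
  have key : ∀ a n : ℕ, q a n ↔ ∃ s, (evaln s c (Nat.pair a n)).isSome := by
    intro a n
    have hdom : q a n ↔ (0 : ℕ) ∈ eval c (Nat.pair a n) := by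
      rw [hc]
      simp [Part.mem_assert_iff, Nat.unpair_pair]
    rw [hdom]
    constructor
    · intro h0
      obtain ⟨s, hs⟩ := evaln_complete.1 h0
      exact ⟨s, by simp [Option.isSome_iff_exists, Option.mem_def] at hs ⊢; exact ⟨0, hs⟩⟩
    · rintro ⟨s, hs⟩
      rw [Option.isSome_iff_exists] at hs
      obtain ⟨y, hy⟩ := hs
      have hy' : y ∈ eval c (Nat.pair a n) := evaln_complete.2 ⟨s, hy⟩
      have : y ∈ ((Part.assert (q a n) fun _ => Part.some ()).map fun _ => 0) := by
        rw [hc] at hy'; simpa [Nat.unpair_pair] using hy'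
      simp [Part.mem_assert_iff] at this
      obtain ⟨hq', hy0⟩ := this
      subst hy0; exact hy'
  -- the dovetailing check
  have hcheck : Computable fun p : ℕ × ℕ =>
      (evaln p.2.unpair.1 c (Nat.pair p.1 p.2.unpair.2)).isSome := by
    have h1 : Primrec fun p : ℕ × ℕ => evaln p.2.unpair.1 c (Nat.pair p.1 p.2.unpair.2) :=
      primrec_evaln.comp <|
        ((Primrec.fst.comp (Primrec.unpair.comp Primrec.snd)).pair (Primrec.const c)).pair
          (Primrec₂.natPair.comp Primrec.fst (Primrec.snd.comp (Primrec.unpair.comp Primrec.snd)))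
    exact (Primrec.option_isSome.comp h1).to_comp
  have hrf : Partrec fun a : ℕ => Nat.rfind fun k =>
      Part.some ((evaln k.unpair.1 c (Nat.pair a k.unpair.2)).isSome) :=
    Partrec.rfind hcheck.to₂.partrec₂
  refine hrf.dom_re.of_eq fun a => ?_
  refine Nat.rfind_dom.trans ?_
  constructor
  · rintro ⟨k, hk, -⟩
    simp only [Part.mem_some_iff] at hk
    exact ⟨k.unpair.2, (key a _).2 ⟨k.unpair.1, hk.symm ▸ rfl⟩⟩
  · rintro ⟨n, hn⟩
    obtain ⟨s, hs⟩ := (key a n).1 hn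
    refine ⟨Nat.pair s n, ?_, ?_⟩
    · simp [Nat.unpair_pair, hs]
    · intro m _; trivial

lemma REPred.false {α} [Primcodable α] : REPred fun _ : α => False := by
  refine Partrec.none.of_eq fun a => ?_
  exact (Part.assert_neg (by simp)).symm

lemma REPred.finsetExists (A : Finset ℕ) {q : ℕ → ℕ → Prop}
    (h : ∀ a ∈ A, REPred fun x => q x a) : REPred fun x => ∃ a ∈ A, q x a := by
  classical
  revert h
  induction A using Finset.induction_on with
  | empty => intro _; exact REPred.false.of_eq (by simp)
  | @insert b A hb ih =>
    intro hins
    have h1 : REPred fun x => q x b := hins b (Finset.mem_insert_self _ _)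
    have h2 : REPred fun x => ∃ a ∈ A, q x a :=
      ih fun a ha => hins a (Finset.mem_insert_of_mem ha)
    exact (h1.or h2).of_eq fun x => by
      simp only [Finset.mem_insert]
      constructor
      · rintro (h | ⟨a, ha, hq⟩)
        · exact ⟨b, Or.inl rfl, h⟩
        · exact ⟨a, Or.inr ha, hq⟩
      · rintro ⟨a, (rfl | ha), hq⟩
        · exact Or.inl hq
        · exact Or.inr ⟨a, ha, hq⟩

theorem zdark_closure_computable (R : ℕ → ℕ → Prop) (hR : IsCeer R)
    (hinf : InfiniteClasses R)
    (hcof : ∀ V : Set ℕ, REPred (· ∈ V) → MeetsInfManyClasses R V →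
      ∃ A : Finset ℕ, ∀ y, (∀ a ∈ A, ¬ R y a) → ∃ x ∈ V, R x y)
    (W : Set ℕ) (hW_ce : REPred (· ∈ W)) (hW_inf : MeetsInfManyClasses R W) :
    ComputablePred (fun x => ∃ y ∈ W, R x y) ∧
    ∀ a, (∀ x ∈ W, ¬ R x a) → ComputablePred (fun x => R x a) := by
  classical
  obtain ⟨eqv, hRre⟩ := hR
  obtain ⟨A, hA⟩ := hcof W hW_ce hW_inf
  set C : ℕ → Prop := fun x => ∃ y ∈ W, R x y with hCdef
  have hCclosed : ∀ x y, R x y → C y → C x := by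
    rintro x y hxy ⟨z, hzW, hyz⟩
    exact ⟨z, hzW, eqv.trans hxy hyz⟩
  have hclass : ∀ a : ℕ, REPred fun x => R x a := fun a =>
    hRre.comp' (Computable.id.pair (Computable.const a))
  have hCre : REPred C :=
    REPred.exists_nat ((hW_ce.comp' Computable.snd).and hRre)
  set A' : Finset ℕ := A.filter fun a => ¬ C a with hA'def
  have hnotC : ∀ x, ¬ C x ↔ ∃ a ∈ A', R x a := by
    intro x
    constructor
    · intro hx
      have hex : ∃ a ∈ A, R x a := by
        by_contra hcon
        push_neg at hcon
        obtain ⟨w, hwW, hwx⟩ := hA x hcon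
        exact hx ⟨w, hwW, eqv.symm hwx⟩
      obtain ⟨a, haA, hxa⟩ := hex
      have hnCa : ¬ C a := fun hCa => hx (hCclosed x a hxa hCa)
      exact ⟨a, Finset.mem_filter.2 ⟨haA, hnCa⟩, hxa⟩
    · rintro ⟨a, haA', hxa⟩ hCx
      exact (Finset.mem_filter.1 haA').2 (hCclosed a x (eqv.symm hxa) hCx)
  have hCcompl : REPred fun x => ¬ C x :=
    (REPred.finsetExists A' fun a _ => hclass a).of_eq fun x => (hnotC x).symm
  have hCcomp : ComputablePred C :=
    ComputablePred.computable_iff_re_compl_re'.2 ⟨hCre, hCcompl⟩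
  refine ⟨hCcomp, ?_⟩
  intro a hdis
  set A'' : Finset ℕ := A.filter fun b => ¬ R b a with hA''def
  have hcompl : ∀ x, ¬ R x a ↔ C x ∨ ∃ b ∈ A'', R x b := by
    intro x
    constructor
    · intro hxna
      by_cases hCx : C x
      · exact Or.inl hCx
      · obtain ⟨b, hbA', hxb⟩ := (hnotC x).1 hCx
        have hbA : b ∈ A := (Finset.mem_filter.1 hbA').1
        have hnba : ¬ R b a := fun hba => hxna (eqv.trans hxb hba)
        exact Or.inr ⟨b, Finset.mem_filter.2 ⟨hbA, hnba⟩, hxb⟩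
    · rintro (⟨y, hyW, hxy⟩ | ⟨b, hbA'', hxb⟩) hxa
      · exact hdis y hyW (eqv.trans (eqv.symm hxy) hxa)
      · exact (Finset.mem_filter.1 hbA'').2 (eqv.trans (eqv.symm hxb) hxa)
  have hcore : REPred fun x => ¬ R x a :=
    (hCre.or (REPred.finsetExists A'' fun b _ => hclass b)).of_eq fun x => (hcompl x).symm
  exact ComputablePred.computable_iff_re_compl_re'.2 ⟨hclass a, hcore⟩
end

section
/- The map X ↦ X ⊕ Id induces an embedding of the dark ceers modulo ≡_I into the light ceers modulo ≡_I: for dark ceers X and Y, X ≤_I Y if and only if X ⊕ Id ≤_I Y ⊕ Id. -/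
section IotaHelpers

variable {R S X Y : ℕ → ℕ → Prop}

private lemma ujoin_ee {u v : ℕ} : UJoin R S (2*u) (2*v) ↔ R u v := by
  constructor
  · rintro (⟨a,b,h1,h2,h⟩|⟨a,b,h1,h2,h⟩)
    · obtain ⟨rfl, rfl⟩ : u = a ∧ v = b := by omega
      exact h
    · omega
  · intro h; exact Or.inl ⟨u,v,rfl,rfl,h⟩

private lemma ujoin_oo {u v : ℕ} : UJoin R S (2*u+1) (2*v+1) ↔ S u v := by
  constructor
  · rintro (⟨a,b,h1,h2,h⟩|⟨a,b,h1,h2,h⟩)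
    · omega
    · obtain ⟨rfl, rfl⟩ : u = a ∧ v = b := by omega
      exact h
  · intro h; exact Or.inr ⟨u,v,rfl,rfl,h⟩

private lemma ujoin_eo {u v : ℕ} : ¬ UJoin R S (2*u) (2*v+1) := by
  rintro (⟨a,b,h1,h2,h⟩|⟨a,b,h1,h2,h⟩) <;> omega

private lemma ujoin_oe {u v : ℕ} : ¬ UJoin R S (2*u+1) (2*v) := by
  rintro (⟨a,b,h1,h2,h⟩|⟨a,b,h1,h2,h⟩) <;> omega

private lemma parity (z : ℕ) : ∃ u, z = 2*u ∨ z = 2*u+1 := ⟨z/2, by omega⟩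

private lemma comp_ite {σ : Type} [Primcodable σ] {c d : ℕ → ℕ} {p q : ℕ → σ}
    (hc : Computable c) (hd : Computable d) (hp : Computable p) (hq : Computable q) :
    Computable (fun x => if c x = d x then p x else q x) := by
  have hb : Computable (fun x : ℕ => c x == d x) :=
    (Primrec.beq.to_comp).comp hc hd
  exact (Computable.cond hb hp hq).of_eq fun x => by
    by_cases h : c x = d x <;> simp [Bool.cond_eq_ite, beq_iff_eq, h]

private lemma comp_half : Computable (fun x : ℕ => x / 2) :=
  (Primrec.nat_div.comp Primrec.id (Primrec.const 2)).to_comp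

private lemma comp_affine (a b : ℕ) : Computable (fun x : ℕ => a * x + b) :=
  (Primrec.nat_add.comp (Primrec.nat_mul.comp (Primrec.const a) Primrec.id)
    (Primrec.const b)).to_comp

private lemma comp_mod (k : ℕ) : Computable (fun x : ℕ => x % k) :=
  (Primrec.nat_mod.comp Primrec.id (Primrec.const k)).to_comp

private lemma comp_ite_even {σ : Type} [Primcodable σ] {p q : ℕ → σ}
    (hp : Computable p) (hq : Computable q) :
    Computable (fun x => if x % 2 = 0 then p x else q x) :=
  comp_ite (comp_mod 2) (Computable.const 0) hp hq

lemma fwd_core {k : ℕ} (hk : k ≠ 0) (hYsym : ∀ a b, Y a b → Y b a)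
    {f : ℕ → ℕ} (hf : Computable f)
    (hr : ∀ x y, X x y ↔ UJoin Y (IdN k) (f x) (f y)) :
    ∃ g : ℕ → ℕ, Computable g ∧
      ∀ x y, UJoin X (fun a b : ℕ => a = b) x y ↔ UJoin Y (fun a b : ℕ => a = b) (g x) (g y) := by
  set A : ℕ → ℕ := fun w => if w % 2 = 0 then w else 2*((w/2) % k)+1 with hA
  have hAcomp : Computable A :=
    comp_ite_even Computable.id
      (((comp_affine 2 1).comp (comp_mod k)).comp comp_half)
  have hAe : ∀ a, A (2*a) = 2*a := fun a => by simp [hA]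
  have hAo : ∀ a, A (2*a+1) = 2*((a % k))+1 := fun a => by
    simp only [hA]
    have h1 : (2*a+1) % 2 = 1 := by omega
    have h2 : (2*a+1) / 2 = a := by omega
    rw [h2]; simp [h1]
  have hAspec : ∀ w w', UJoin Y (IdN k) w w' ↔ UJoin Y (fun a b : ℕ => a = b) (A w) (A w') := by
    intro w w'
    obtain ⟨a, ha | ha⟩ := parity w <;> obtain ⟨b, hb | hb⟩ := parity w' <;> subst ha hb
    · rw [hAe, hAe, ujoin_ee, ujoin_ee]
    · rw [hAe, hAo]
      exact ⟨fun h => absurd h ujoin_eo, fun h => absurd h ujoin_eo⟩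
    · rw [hAo, hAe]
      exact ⟨fun h => absurd h ujoin_oe, fun h => absurd h ujoin_oe⟩
    · rw [hAo, hAo, ujoin_oo, ujoin_oo]; rfl
  have hAodd : ∀ w v, ¬ UJoin Y (fun a b : ℕ => a = b) (A w) (2*(v+k)+1) := by
    intro w v h
    obtain ⟨a, ha | ha⟩ := parity w <;> subst ha
    · rw [hAe] at h; exact ujoin_eo h
    · rw [hAo] at h
      have := ujoin_oo.mp h
      have : a % k < k := Nat.mod_lt _ (by omega)
      omega
  refine ⟨fun x => if x % 2 = 0 then A (f (x/2)) else x + 2*k, ?_, ?_⟩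
  · exact comp_ite_even (hAcomp.comp (hf.comp comp_half))
      ((comp_affine 1 (2*k)).of_eq (fun x => by ring))
  · have g_even : ∀ u, (if (2*u) % 2 = 0 then A (f ((2*u)/2)) else 2*u + 2*k) = A (f u) := by
      intro u
      have e2 : (2*u)/2 = u := by omega
      rw [e2, if_pos (by omega : (2*u) % 2 = 0)]
    have g_odd : ∀ u, (if (2*u+1) % 2 = 0 then A (f ((2*u+1)/2)) else 2*u+1 + 2*k)
        = 2*(u+k)+1 := by
      intro u
      rw [if_neg (by omega)]; omega
    intro x y
    obtain ⟨u, hu | hu⟩ := parity x <;> obtain ⟨v, hv | hv⟩ := parity y <;> subst hu hv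
    · simp only [g_even]
      rw [ujoin_ee, hr, hAspec]
    · simp only [g_even, g_odd]
      exact ⟨fun h => absurd h ujoin_eo, fun h => absurd h (hAodd _ _)⟩
    · simp only [g_even, g_odd]
      refine ⟨fun h => absurd h ujoin_oe, fun h => absurd ?_ (hAodd (f v) u)⟩
      rcases h with (⟨a,b,h1,h2,h3⟩|⟨a,b,h1,h2,h3⟩)
      · exact Or.inl ⟨b,a,h2,h1,hYsym _ _ h3⟩
      · exact Or.inr ⟨b,a,h2,h1,h3.symm⟩
    · simp only [g_odd]
      rw [ujoin_oo, ujoin_oo]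
      omega

lemma bwd_collapse {k : ℕ} (hk : k ≠ 0) {g : ℕ → ℕ} (hg : Computable g)
    (hr : ∀ x y, UJoin X (fun a b : ℕ => a = b) x y ↔
      UJoin (UJoin Y (fun a b : ℕ => a = b)) (IdN k) (g x) (g y)) :
    ∃ h : ℕ → ℕ, Computable h ∧ ∀ x y, X x y ↔ UJoin Y (fun a b : ℕ => a = b) (h x) (h y) := by
  set c : ℕ → ℕ := fun z => if z % 2 = 0 then
      (if (z/2) % 2 = 0 then z/2 else z/2 + 2*k) else 2*((z/2) % k) + 1 with hc
  have hadd : Computable (fun x : ℕ => x + 2*k) :=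
    (comp_affine 1 (2*k)).of_eq (fun x => by ring)
  have hccomp : Computable c := by
    refine comp_ite_even ?_ (((comp_affine 2 1).comp (comp_mod k)).comp comp_half)
    exact (comp_ite_even Computable.id hadd).comp comp_half
  have c1 : ∀ a, c (2*(2*a)) = 2*a := by
    intro a
    have e1 : (2*(2*a)) % 2 = 0 := by omega
    have e2 : (2*(2*a)) / 2 = 2*a := by omega
    have e3 : (2*a) % 2 = 0 := by omega
    simp only [hc]
    rw [if_pos e1, e2, if_pos e3]
  have c2 : ∀ a, c (2*(2*a+1)) = 2*(a+k)+1 := by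
    intro a
    have e1 : (2*(2*a+1)) % 2 = 0 := by omega
    have e2 : (2*(2*a+1)) / 2 = 2*a+1 := by omega
    simp only [hc]
    rw [if_pos e1, e2, if_neg (by omega : ¬ (2*a+1) % 2 = 0)]
    omega
  have c3 : ∀ a, c (2*a+1) = 2*(a % k)+1 := by
    intro a
    have e2 : (2*a+1) / 2 = a := by omega
    simp only [hc]
    rw [if_neg (by omega : ¬ (2*a+1) % 2 = 0), e2]
  have cspec : ∀ z z', UJoin (UJoin Y (fun a b : ℕ => a = b)) (IdN k) z z' ↔
      UJoin Y (fun a b : ℕ => a = b) (c z) (c z') := by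
    have modlt : ∀ a : ℕ, a % k < k := fun a => Nat.mod_lt _ (by omega)
    intro z z'
    obtain ⟨w, hw | hw⟩ := parity z <;> [skip; skip] <;> subst hw
    · obtain ⟨a, ha | ha⟩ := parity w <;> subst ha <;>
        obtain ⟨w', hw' | hw'⟩ := parity z' <;> [skip; skip; skip; skip] <;> subst hw'
      · obtain ⟨b, hb | hb⟩ := parity w' <;> subst hb
        · rw [c1, c1]
          simp only [ujoin_ee]
        · rw [c1, c2, ujoin_ee]
          exact ⟨fun h => absurd h ujoin_eo, fun h => absurd h ujoin_eo⟩
      · rw [c1, c3]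
        exact ⟨fun h => absurd h ujoin_eo, fun h => absurd h ujoin_eo⟩
      · obtain ⟨b, hb | hb⟩ := parity w' <;> subst hb
        · rw [c2, c1, ujoin_ee]
          exact ⟨fun h => absurd h ujoin_oe, fun h => absurd h ujoin_oe⟩
        · rw [c2, c2, ujoin_ee, ujoin_oo, ujoin_oo]
          omega
      · rw [c2, c3]
        constructor
        · intro h; exact absurd h ujoin_eo
        · intro h; exact absurd (ujoin_oo.mp h) (by have := modlt w'; omega)
    · obtain ⟨w', hw' | hw'⟩ := parity z' <;> subst hw'
      · obtain ⟨b, hb | hb⟩ := parity w' <;> subst hb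
        · rw [c3, c1]
          exact ⟨fun h => absurd h ujoin_oe, fun h => absurd h ujoin_oe⟩
        · rw [c3, c2]
          constructor
          · intro h; exact absurd h ujoin_oe
          · intro h; exact absurd (ujoin_oo.mp h) (by have := modlt w; omega)
      · rw [c3, c3, ujoin_oo, ujoin_oo]
        exact ⟨fun h => h, fun h => h⟩
  have hdbl : Computable (fun x : ℕ => 2*x) := (comp_affine 2 0).of_eq (fun x => by ring)
  refine ⟨fun x => c (g (2*x)), hccomp.comp (hg.comp hdbl), ?_⟩
  intro x y
  rw [← cspec, ← hr, ujoin_ee]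

lemma dark_step (hX : IsDark X) {h : ℕ → ℕ} (hh : Computable h)
    (hr : ∀ x y, X x y ↔ UJoin Y (fun a b : ℕ => a = b) (h x) (h y)) :
    ∃ k, CompReduces X (OplusId Y k) := by
  classical
  -- the list of values h y for y < x
  set Lst : ℕ → List ℕ := fun x => Nat.rec [] (fun y IH => h y :: IH) x with hLstdef
  have hLst : Computable Lst := by
    have : Computable₂ (fun (_ : ℕ) (p : ℕ × List ℕ) => h p.1 :: p.2) :=
      Computable.list_cons.comp (hh.comp (Computable.fst.comp Computable.snd))
        (Computable.snd.comp Computable.snd)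
    exact Computable.nat_rec Computable.id (Computable.const []) this
  have mem_Lst : ∀ x v, v ∈ Lst x ↔ ∃ y, y < x ∧ h y = v := by
    intro x v
    induction x with
    | zero => simp [hLstdef]
    | succ n ih =>
      constructor
      · intro hv
        rcases List.mem_cons.mp hv with hv | hv
        · exact ⟨n, by omega, hv.symm⟩
        · obtain ⟨y, hy1, hy2⟩ := ih.mp hv
          exact ⟨y, by omega, hy2⟩
      · rintro ⟨y, hy1, hy2⟩
        rcases Nat.lt_succ_iff_lt_or_eq.mp hy1 with hy | rfl
        · exact List.mem_cons_of_mem _ (ih.mpr ⟨y, hy, hy2⟩)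
        · exact hy2 ▸ List.mem_cons_self
  set T : Set ℕ := {x | h x % 2 = 1 ∧ h x ∉ Lst x} with hTdef
  -- T is a c.e. (in fact computable) set
  have hTre : REPred (· ∈ T) := by
    apply ComputablePred.to_re
    rw [ComputablePred.computable_iff]
    refine ⟨fun x => if h x % 2 = 0 then false else
      (if (Lst x).idxOf (h x) = (Lst x).length then true else false), ?_, ?_⟩
    · refine comp_ite (comp_mod 2 |>.comp hh) (Computable.const 0) (Computable.const false) ?_
      refine comp_ite ?_ (Computable.list_length.comp hLst) (Computable.const true)
        (Computable.const false)
      exact (Primrec.list_idxOf.to_comp).comp hh hLst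
    · funext x
      by_cases h1 : h x % 2 = 0
      · simp [hTdef, h1]
      · by_cases h2 : h x ∈ Lst x
        · have : ¬ ((Lst x).idxOf (h x) = (Lst x).length) := by
            rw [List.idxOf_eq_length_iff]; simpa using h2
          simp [hTdef, h1, h2, this]
        · have : (Lst x).idxOf (h x) = (Lst x).length := List.idxOf_eq_length_iff.mpr h2
          simp [hTdef, h1, h2, this]
          omega
  -- distinct elements of T have different h-values, hence are X-inequivalent
  have hodd : ∀ x, h x % 2 = 1 → h x = 2 * (h x / 2) + 1 := fun x hx => by omega
  have hXneq : ∀ x y, h x % 2 = 1 → h y % 2 = 1 → X x y → h x = h y := by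
    intro x y hx hy hxy
    have := (hr x y).mp hxy
    rw [hodd x hx, hodd y hy] at this
    have := ujoin_oo.mp this
    omega
  have hTtrans : ∀ x ∈ T, ∀ y ∈ T, x ≠ y → ¬ X x y := by
    intro x hx y hy hxy hXxy
    have heq : h x = h y := hXneq x y hx.1 hy.1 hXxy
    rcases Nat.lt_or_ge x y with hlt | hge
    · exact hy.2 ((mem_Lst y (h y)).mpr ⟨x, hlt, heq⟩)
    · have hlt : y < x := by omega
      exact hx.2 ((mem_Lst x (h x)).mpr ⟨y, hlt, heq.symm⟩)
  -- T must be finite, else it is an infinite c.e. transversal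
  have hTfin : T.Finite := by
    by_contra hinf
    exact hX.2.2 ⟨T, hTre, hinf, hTtrans⟩
  -- the finite list of odd values in the range of h
  set L : List ℕ := (hTfin.image h).toFinset.toList with hLdef
  have hmemL : ∀ x, h x % 2 = 1 → h x ∈ L := by
    intro x hx
    have hPx : h x = h x := rfl
    have hex : ∃ n, h n = h x := ⟨x, rfl⟩
    set y := Nat.find hex with hydef
    have hy : h y = h x := Nat.find_spec hex
    have hyT : y ∈ T := by
      constructor
      · rw [hy]; exact hx
      · intro hmem
        obtain ⟨y', hy1, hy2⟩ := (mem_Lst y (h y)).mp hmem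
        exact Nat.find_min hex hy1 (by rw [hy2, hy])
    rw [hLdef]
    rw [Finset.mem_toList, Set.Finite.mem_toFinset]
    exact ⟨y, hyT, hy⟩
  set k := L.length + 1 with hkdef
  refine ⟨k, fun x => if h x % 2 = 0 then h x else 2 * (L.idxOf (h x)) + 1, ?_, ?_⟩
  · exact comp_ite (comp_mod 2 |>.comp hh) (Computable.const 0) hh
      ((comp_affine 2 1).comp ((Primrec.list_idxOf₁ L).to_comp.comp hh))
  · intro x y
    have hOp : OplusId Y k = UJoin Y (IdN k) := if_neg (by omega)
    rw [hOp]
    have idx_lt : ∀ v, v ∈ L → L.idxOf v % k = L.idxOf v := by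
      intro v hv
      have := List.idxOf_lt_length_iff.mpr hv
      exact Nat.mod_eq_of_lt (by omega)
    obtain ⟨a, ha | ha⟩ := parity (h x) <;> obtain ⟨b, hb | hb⟩ := parity (h y)
    · have ex : h x % 2 = 0 := by omega
      have ey : h y % 2 = 0 := by omega
      simp only [if_pos ex, if_pos ey]
      rw [hr, ha, hb, ujoin_ee, ujoin_ee]
    · have ex : h x % 2 = 0 := by omega
      have ey : ¬ (h y % 2 = 0) := by omega
      simp only [if_pos ex, if_neg ey]
      rw [hr, ha]
      exact ⟨fun h' => absurd (hb ▸ h') ujoin_eo, fun h' => absurd h' ujoin_eo⟩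
    · have ex : ¬ (h x % 2 = 0) := by omega
      have ey : h y % 2 = 0 := by omega
      simp only [if_neg ex, if_pos ey]
      rw [hr, hb]
      exact ⟨fun h' => absurd (ha ▸ h') ujoin_oe, fun h' => absurd h' ujoin_oe⟩
    · have ex : ¬ (h x % 2 = 0) := by omega
      have ey : ¬ (h y % 2 = 0) := by omega
      have hx1 : h x % 2 = 1 := by omega
      have hy1 : h y % 2 = 1 := by omega
      have hxL := hmemL x hx1
      have hyL := hmemL y hy1
      simp only [if_neg ex, if_neg ey]
      have l1 : X x y ↔ (2*a+1 : ℕ) = 2*b+1 := by rw [hr, ha, hb, ujoin_oo]; omega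
      constructor
      · intro hx'
        have heq : h x = h y := by rw [ha, hb]; exact l1.mp hx'
        exact ujoin_oo.mpr (show IdN k _ _ by unfold IdN; rw [heq])
      · intro h'
        have h2 := ujoin_oo.mp h'
        unfold IdN at h2
        rw [idx_lt _ hxL, idx_lt _ hyL] at h2
        have heq := (List.idxOf_inj hxL).mp h2
        exact l1.mpr (by rw [← ha, ← hb, heq])


end IotaHelpers

theorem iota_embedding (X Y : ℕ → ℕ → Prop) (hX : IsDark X) (hY : IsDark Y) :
    ReducesI X Y ↔
      ReducesI (UJoin X (fun x y : ℕ => x = y)) (UJoin Y (fun x y : ℕ => x = y)) := by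
  have hYsym : ∀ a b, Y a b → Y b a := fun a b h => hY.1.1.symm h
  have hdbl : Computable (fun x : ℕ => 2*x) := (comp_affine 2 0).of_eq (fun x => by ring)
  constructor
  · rintro ⟨k, f, hf, hr⟩
    by_cases hk : k = 0
    · subst hk
      have hOp : OplusId Y 0 = Y := if_pos rfl
      rw [hOp] at hr
      have hr1 : ∀ x y, X x y ↔ UJoin Y (IdN 1) (2 * f x) (2 * f y) := by
        intro x y
        rw [ujoin_ee]
        exact hr x y
      obtain ⟨g, hg, hgspec⟩ := fwd_core one_ne_zero hYsym
        (hdbl.comp hf : Computable fun x => 2 * f x) hr1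
      exact ⟨0, g, hg, fun x y => by
        rw [show OplusId (UJoin Y (fun a b : ℕ => a = b)) 0
          = UJoin Y (fun a b : ℕ => a = b) from if_pos rfl]
        exact hgspec x y⟩
    · have hOp : OplusId Y k = UJoin Y (IdN k) := if_neg hk
      rw [hOp] at hr
      obtain ⟨g, hg, hgspec⟩ := fwd_core hk hYsym hf hr
      exact ⟨0, g, hg, fun x y => by
        rw [show OplusId (UJoin Y (fun a b : ℕ => a = b)) 0
          = UJoin Y (fun a b : ℕ => a = b) from if_pos rfl]
        exact hgspec x y⟩
  · rintro ⟨k, g, hg, hr⟩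
    by_cases hk : k = 0
    · subst hk
      have hOp : OplusId (UJoin Y (fun a b : ℕ => a = b)) 0
          = UJoin Y (fun a b : ℕ => a = b) := if_pos rfl
      rw [hOp] at hr
      have hspec : ∀ x y, X x y ↔ UJoin Y (fun a b : ℕ => a = b) (g (2*x)) (g (2*y)) := by
        intro x y
        rw [← hr, ujoin_ee]
      exact dark_step hX (hg.comp hdbl) hspec
    · have hOp : OplusId (UJoin Y (fun a b : ℕ => a = b)) k
          = UJoin (UJoin Y (fun a b : ℕ => a = b)) (IdN k) := if_neg hk
      rw [hOp] at hr
      obtain ⟨h, hh, hspec⟩ := bwd_collapse hk hg hr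
      exact dark_step hX hh hspec
end
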